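/- (Lower bound via dual feasibility) Let F be a finite set of n-qubit pure states such that ∑_{a=1}^{4ⁿ} |Tr(P_a |ψ⟩⟨ψ|)| ≤ M for all ψ ∈ F, where {P_a} are the 4ⁿ Pauli operators. Then for any Hermitian ρ with an F-pseudo-mixture decomposition, R_F(ρ) ≥ (1/M)·∑_{a=1}^{4ⁿ} |Tr(P_a ρ)|. -/

import Mathlib

open Matrix

noncomputable def pauli : Fin 4 → Matrix (Fin 2) (Fin 2) ℂ
  | 0 => 1
  | 1 => !![0, 1; 1, 0]
  | 2 => !![0, -Complex.I; Complex.I, 0]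
  | 3 => !![1, 0; 0, -1]

/-- The `n`-fold tensor product of single-qubit Pauli matrices indexed by `f`. -/
noncomputable def pauliTensor {n : ℕ} (f : Fin n → Fin 4) :
    Matrix (Fin n → Fin 2) (Fin n → Fin 2) ℂ :=
  fun i j => ∏ k, pauli (f k) (i k) (j k)

/-- The projector `|ψ⟩⟨ψ|` onto a vector `ψ`. -/
noncomputable def proj {α : Type*} (ψ : α → ℂ) : Matrix α α ℂ :=
  Matrix.vecMulVec ψ (star ψ)

/-- `c` gives a pseudo-mixture decomposition of `ρ` into projectors onto elements of `F`. -/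
def IsDecomp {α : Type*} (F : Finset (α → ℂ)) (ρ : Matrix α α ℂ) (c : F → ℝ) : Prop :=
  (∑ i, c i = 1) ∧ ρ = ∑ i : F, (c i : ℂ) • proj (i : α → ℂ)

/-- The robustness of `ρ` with respect to the free states `F`. -/
noncomputable def robustness {α : Type*} (F : Finset (α → ℂ)) (ρ : Matrix α α ℂ) : ℝ :=
  sInf { t | ∃ c : F → ℝ, IsDecomp F ρ c ∧ t = ∑ i, |c i| }

theorem robustness_lower_bound {n : ℕ} (F : Finset ((Fin n → Fin 2) → ℂ)) (M : ℝ)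
    (hM : ∀ ψ ∈ F, ∑ f : Fin n → Fin 4,
      ‖(pauliTensor f * proj ψ).trace‖ ≤ M)
    (ρ : Matrix (Fin n → Fin 2) (Fin n → Fin 2) ℂ) (hherm : ρ.IsHermitian)
    (hdec : ∃ c : F → ℝ, IsDecomp F ρ c) :
    (1 / M) * ∑ f : Fin n → Fin 4, ‖(pauliTensor f * ρ).trace‖ ≤
      robustness F ρ := by
  -- key estimate
  have key : ∀ c : F → ℝ, IsDecomp F ρ c →
      ∑ f : Fin n → Fin 4, ‖(pauliTensor f * ρ).trace‖ ≤ M * ∑ i, |c i| := by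
    rintro c ⟨hc1, hc2⟩
    calc ∑ f : Fin n → Fin 4, ‖(pauliTensor f * ρ).trace‖
        ≤ ∑ f : Fin n → Fin 4, ∑ i : F,
            |c i| * ‖(pauliTensor f * proj (i : (Fin n → Fin 2) → ℂ)).trace‖ := by
          refine Finset.sum_le_sum fun f _ => ?_
          rw [hc2, Matrix.mul_sum, trace_sum]
          refine le_trans (norm_sum_le _ _) ?_
          refine Finset.sum_le_sum fun i _ => ?_
          rw [Matrix.mul_smul, trace_smul, smul_eq_mul, norm_mul, Complex.norm_real, Real.norm_eq_abs]
      _ = ∑ i : F, |c i| *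
            ∑ f : Fin n → Fin 4, ‖(pauliTensor f * proj (i : (Fin n → Fin 2) → ℂ)).trace‖ := by
          rw [Finset.sum_comm]
          simp [Finset.mul_sum]
      _ ≤ ∑ i : F, |c i| * M :=
          Finset.sum_le_sum fun i _ => mul_le_mul_of_nonneg_left (hM i i.2) (abs_nonneg _)
      _ = M * ∑ i, |c i| := by rw [← Finset.sum_mul, mul_comm]
  obtain ⟨c0, hc0⟩ := hdec
  have hne : {t | ∃ c : F → ℝ, IsDecomp F ρ c ∧ t = ∑ i, |c i|}.Nonempty :=
    ⟨∑ i, |c0 i|, c0, hc0, rfl⟩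
  rcases le_or_gt M 0 with hMle | hMpos
  · -- then every t = ∑|c i| dominates ∑|Tr| / M trivially since sums are nonneg
    have h0 : ∑ f : Fin n → Fin 4, ‖(pauliTensor f * ρ).trace‖ ≤ 0 :=
      le_trans (key c0 hc0)
        (mul_nonpos_of_nonpos_of_nonneg hMle (Finset.sum_nonneg fun i _ => abs_nonneg _))
    have h0' : ∑ f : Fin n → Fin 4, ‖(pauliTensor f * ρ).trace‖ = 0 :=
      le_antisymm h0 (Finset.sum_nonneg fun f _ => norm_nonneg _)
    rw [h0', mul_zero]
    unfold robustness
    refine Real.sInf_nonneg ?_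
    rintro t ⟨c, _, rfl⟩
    exact Finset.sum_nonneg fun i _ => abs_nonneg _
  · unfold robustness
    refine le_csInf hne ?_
    rintro t ⟨c, hc, rfl⟩
    rw [div_mul_eq_mul_div, one_mul, div_le_iff₀ hMpos, mul_comm]
    exact key c hc
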